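/- Let r ≥ 1 be an integer. For every ε > 0 there exists n₀ such that for all n ≥ n₀: if G is a non-bipartite B_{r+1}-free simple graph on n vertices with the maximum number of edges among such graphs, then e(G) ≥ (1/4 − ε)n², and for any partition V(G) = S ∪ T realizing a maximum cut one has e(S) + e(T) ≤ εn² and (1/2 − (3/2)√ε)n ≤ |S|, |T| ≤ (1/2 + (3/2)√ε)n, where e(S) and e(T) denote the numbers of edges inside S and inside T respectively. -/

import Mathlib

open SimpleGraph Set

/-- `G` contains no book `B_{r+1}`, i.e. no two adjacent vertices of `G` have at least
`r + 1` common neighbours. -/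
def BookFree {V : Type*} (r : ℕ) (G : SimpleGraph V) : Prop :=
  ∀ u v : V, G.Adj u v → ({w : V | G.Adj u w ∧ G.Adj v w}).ncard ≤ r

/-- `e(S)`: the number of edges of `G` with both endpoints in `S`. -/
noncomputable def edgesIn {V : Type*} (G : SimpleGraph V) (S : Set V) : ℕ :=
  {e ∈ G.edgeSet | ∀ v ∈ e, v ∈ S}.ncard

/-- `e(S, T)`: the number of edges of `G` with one endpoint in `S` and the other in `T`. -/
noncomputable def cutCount {V : Type*} (G : SimpleGraph V) (S T : Set V) : ℕ :=
  {e ∈ G.edgeSet | ∃ u ∈ S, ∃ v ∈ T, e = s(u, v)}.ncard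

/-- `(S, T)` is a partition of the vertex set of `G` realizing a maximum cut. -/
def IsMaxCut {V : Type*} (G : SimpleGraph V) (S T : Set V) : Prop :=
  S ∪ T = Set.univ ∧ S ∩ T = ∅ ∧
    ∀ S' T' : Set V, S' ∪ T' = Set.univ → S' ∩ T' = ∅ →
      cutCount G S' T' ≤ cutCount G S T

/-- Let `r ≥ 1`.  For every `ε > 0` there is `n₀` such that for all `n ≥ n₀`: if `G` is a
non-bipartite `B_{r+1}`-free graph on `n` vertices with the maximum number of edges among such
graphs, then `e(G) ≥ (1/4 - ε)n²`, and any maximum-cut partition `V(G) = S ∪ T` satisfies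
`e(S) + e(T) ≤ εn²` and `(1/2 - (3/2)√ε)n ≤ |S|, |T| ≤ (1/2 + (3/2)√ε)n`. -/
private lemma arith_nat (a b m : ℕ) (h : b + a = m) : b * a * 4 ≤ m * m := by
  zify
  zify at h
  nlinarith [sq_nonneg ((b:ℤ) - a), h]

private lemma arith1 (x k n : ℝ) (h2 : (k-3)*(n-k) ≤ x) (hb1 : n+2 ≤ 2*k) (hb2 : 2*k ≤ n+3)
    (hn : 20 ≤ n) : n^2/4 - 2*n ≤ x := by nlinarith

private lemma arith2 (ε n : ℝ) (h : 64 < ε*n) (hn : 0 ≤ n) : 64*n ≤ ε*n^2 := by nlinarith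

private lemma arith3 (e ε n : ℝ) (h1 : n^2/4 - 2*n ≤ e) (h2 : 64*n ≤ ε*n^2) (hn : 0 ≤ n) :
    (1/4 - ε)*n^2 ≤ e := by nlinarith

private lemma arith5 (δ ε n : ℝ) (h : δ ≤ ε/4) (hn : 0 ≤ n^2) : 2*δ*n^2 ≤ ε*n^2/2 := by nlinarith

private lemma arith9 (s t n ε : ℝ) (hst : s + t = n) (hlow : n^2/4 - 4*n - ε*n^2/2 ≤ s*t)
    (h16 : 16*n ≤ ε*n^2/4) : (s-t)^2 ≤ 9*ε*n^2 := by nlinarith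

private def zrel (x y : ZMod 5) : Prop := x - y = 1 ∨ y - x = 1

private instance : DecidableRel zrel := fun x y => by unfold zrel; infer_instance

private lemma zrel_symm : ∀ {x y}, zrel x y → zrel y x := fun h => h.symm

private lemma zrel_irrefl : ∀ x, ¬ zrel x x := by decide

private lemma zrel_no_tri : ∀ x y z : ZMod 5, zrel x y → zrel x z → zrel y z → False := by decide

private def lab (k m : ℕ) : ZMod 5 :=
  if m = 0 then 2 else if m = 1 then 3 else if m = 2 then 4
  else if m < k then 0 else 1

private def Hgraph (n k : ℕ) : SimpleGraph (Fin n) where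
  Adj u v := zrel (lab k u.val) (lab k v.val)
  symm := ⟨fun _ _ h => zrel_symm h⟩
  loopless := ⟨fun _ h => zrel_irrefl _ h⟩

private lemma Hgraph_bookFree (n k r : ℕ) : BookFree r (Hgraph n k) := by
  intro u v huv
  have : {w : Fin n | (Hgraph n k).Adj u w ∧ (Hgraph n k).Adj v w} = ∅ := by
    ext w
    simp only [Set.mem_setOf_eq, Set.mem_empty_iff_false, iff_false, not_and]
    intro h1 h2
    exact zrel_no_tri _ _ _ huv h1 h2
  rw [this]
  simp

private lemma fin2_cycle' : ∀ a b c d e : Fin 2, a = b ∨ b = c ∨ c = d ∨ d = e ∨ e = a := by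
  decide

private lemma fin2_cycle (a b c d e : Fin 2) (h1 : a ≠ b) (h2 : b ≠ c) (h3 : c ≠ d)
    (h4 : d ≠ e) (h5 : e ≠ a) : False := by
  rcases fin2_cycle' a b c d e with h|h|h|h|h <;> tauto

private lemma lab_lo (k m : ℕ) (h1 : 3 ≤ m) (h2 : m < k) : lab k m = 0 := by
  unfold lab
  rw [if_neg (by omega), if_neg (by omega), if_neg (by omega), if_pos (by omega)]

private lemma lab_hi (k m : ℕ) (h0 : 3 < k) (h1 : k ≤ m) : lab k m = 1 := by
  unfold lab
  rw [if_neg (by omega), if_neg (by omega), if_neg (by omega), if_neg (by omega)]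

private lemma Hgraph_not_col (n k : ℕ) (h3 : 3 < k) (hkn : k < n) :
    ¬ (Hgraph n k).Colorable 2 := by
  intro ⟨C⟩
  have l0 : lab k 0 = 2 := by unfold lab; simp
  have l1 : lab k 1 = 3 := by unfold lab; norm_num
  have l2 : lab k 2 = 4 := by unfold lab; norm_num
  have l3 : lab k 3 = 0 := lab_lo k 3 le_rfl h3
  have lk : lab k k = 1 := lab_hi k k h3 le_rfl
  have a34 : (Hgraph n k).Adj ⟨3, by omega⟩ ⟨k, hkn⟩ := by
    show zrel (lab k 3) (lab k k); rw [l3, lk]; right; decide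
  have a40 : (Hgraph n k).Adj ⟨k, hkn⟩ ⟨0, by omega⟩ := by
    show zrel (lab k k) (lab k 0); rw [lk, l0]; right; decide
  have a01 : (Hgraph n k).Adj ⟨0, by omega⟩ ⟨1, by omega⟩ := by
    show zrel (lab k 0) (lab k 1); rw [l0, l1]; right; decide
  have a12 : (Hgraph n k).Adj ⟨1, by omega⟩ ⟨2, by omega⟩ := by
    show zrel (lab k 1) (lab k 2); rw [l1, l2]; right; decide
  have a23 : (Hgraph n k).Adj ⟨2, by omega⟩ ⟨3, by omega⟩ := by
    show zrel (lab k 2) (lab k 3); rw [l2, l3]; right; decide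
  exact fin2_cycle _ _ _ _ _ (C.valid a34) (C.valid a40) (C.valid a01) (C.valid a12) (C.valid a23)

private lemma Hgraph_edges (n k : ℕ) (h3 : 3 < k) (hkn : k < n) :
    (k - 3) * (n - k) ≤ (Hgraph n k).edgeSet.ncard := by
  classical
  set a := k - 3 with ha
  set b := n - k with hb
  let ι : Fin a × Fin b → Sym2 (Fin n) := fun p =>
    s(⟨p.1.val + 3, by have := p.1.2; omega⟩, ⟨p.2.val + k, by have := p.2.2; omega⟩)
  have hmem : ∀ p : Fin a × Fin b, ι p ∈ (Hgraph n k).edgeSet := by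
    rintro ⟨i, j⟩
    show (Hgraph n k).Adj _ _
    show zrel (lab k (i.val + 3)) (lab k (j.val + k))
    rw [lab_lo k _ (by omega) (by have := i.2; omega), lab_hi k _ h3 (by omega)]
    right; decide
  have hinj : Function.Injective ι := by
    rintro ⟨i, j⟩ ⟨i', j'⟩ hij
    have hi := i.2; have hj := j.2; have hi' := i'.2; have hj' := j'.2
    simp only [ι, Sym2.eq, Sym2.rel_iff', Prod.mk.injEq, Prod.swap_prod_mk,
      Fin.mk.injEq] at hij
    rcases hij with ⟨h1, h2⟩ | ⟨h1, h2⟩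
    · have hii : (i : ℕ) = i' := by omega
      have hjj : (j : ℕ) = j' := by omega
      simp [Prod.ext_iff, Fin.ext_iff, hii, hjj]
    · exact absurd h1 (by omega)
  calc a * b = Fintype.card (Fin a × Fin b) := by simp
  _ = ((Finset.univ : Finset (Fin a × Fin b)).image ι).card := by
      rw [Finset.card_image_of_injective _ hinj, Finset.card_univ]
  _ = ((↑((Finset.univ : Finset (Fin a × Fin b)).image ι) : Set (Sym2 (Fin n)))).ncard := by
      rw [Set.ncard_coe_finset]
  _ ≤ (Hgraph n k).edgeSet.ncard := by
      apply Set.ncard_le_ncard _ (Set.toFinite _)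
      intro e he
      simp only [Finset.coe_image, Set.mem_image] at he
      obtain ⟨p, _, rfl⟩ := he
      exact hmem p

variable {V : Type*} [Fintype V] [DecidableEq V]

/-- partition of the edge count -/
private lemma edge_partition (G : SimpleGraph V) (S T : Set V) (hu : S ∪ T = Set.univ)
    (hi : S ∩ T = ∅) :
    G.edgeSet.ncard = cutCount G S T + edgesIn G S + edgesIn G T := by
  classical
  have hST : ∀ x : V, x ∈ S ∨ x ∈ T := by
    intro x
    have : x ∈ S ∪ T := by rw [hu]; trivial
    exact this
  have hd : ∀ x : V, x ∈ S → x ∈ T → False := by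
    intro x hx hx'
    have : x ∈ S ∩ T := ⟨hx, hx'⟩
    rw [hi] at this; exact this
  set C := {e ∈ G.edgeSet | ∃ u ∈ S, ∃ v ∈ T, e = s(u, v)} with hC
  set IS := {e ∈ G.edgeSet | ∀ v ∈ e, v ∈ S} with hIS
  set IT := {e ∈ G.edgeSet | ∀ v ∈ e, v ∈ T} with hIT
  have hcover : G.edgeSet = C ∪ IS ∪ IT := by
    ext e
    induction e using Sym2.ind with
    | _ u v =>
      constructor
      · intro he
        rcases hST u with hu1 | hu1 <;> rcases hST v with hv1 | hv1
        · refine Or.inl (Or.inr ⟨he, ?_⟩)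
          intro w hw
          rcases Sym2.mem_iff.1 hw with rfl | rfl <;> assumption
        · exact Or.inl (Or.inl ⟨he, u, hu1, v, hv1, rfl⟩)
        · refine Or.inl (Or.inl ⟨he, v, hv1, u, hu1, ?_⟩)
          rw [Sym2.eq_swap]
        · refine Or.inr ⟨he, ?_⟩
          intro w hw
          rcases Sym2.mem_iff.1 hw with rfl | rfl <;> assumption
      · rintro ((⟨he, _⟩ | ⟨he, _⟩) | ⟨he, _⟩) <;> exact he
  have d1 : Disjoint C IS := by
    rw [Set.disjoint_left]
    rintro e ⟨he, u, hu1, v, hv1, rfl⟩ ⟨-, hall⟩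
    exact hd v (hall v (Sym2.mem_mk_right u v)) hv1
  have d2 : Disjoint (C ∪ IS) IT := by
    rw [Set.disjoint_left]
    rintro e he ⟨he', hallT⟩
    induction e using Sym2.ind with
    | _ u v =>
      have huT := hallT u (Sym2.mem_mk_left u v)
      rcases he with ⟨-, u', hu1, v', hv1, heq⟩ | ⟨-, hallS⟩
      · have hu'mem : u' ∈ s(u, v) := by rw [heq]; exact Sym2.mem_mk_left u' v'
        exact hd u' hu1 (hallT u' hu'mem)
      · exact hd u (hallS u (Sym2.mem_mk_left u v)) huT
  rw [hcover]
  rw [Set.ncard_union_eq d2 ((Set.toFinite _).union (Set.toFinite _)) (Set.toFinite _),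
    Set.ncard_union_eq d1 (Set.toFinite _) (Set.toFinite _)]
  rfl

private lemma cut_le_mul (G : SimpleGraph V) (S T : Set V) (hi : S ∩ T = ∅) :
    cutCount G S T ≤ S.ncard * T.ncard := by
  classical
  have hprod : (S ×ˢ T).ncard = S.ncard * T.ncard := by
    rw [← Nat.card_coe_set_eq, ← Nat.card_coe_set_eq, ← Nat.card_coe_set_eq,
      Nat.card_congr (Equiv.Set.prod S T), Nat.card_prod]
  rw [← hprod]
  unfold cutCount
  apply Set.ncard_le_ncard_of_injOn
    (f := fun e => if h : ∃ p : V × V, p.1 ∈ S ∧ p.2 ∈ T ∧ e = s(p.1, p.2)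
      then h.choose else e.out)
  · rintro e ⟨he, u, hu, v, hv, rfl⟩
    have hex : ∃ p : V × V, p.1 ∈ S ∧ p.2 ∈ T ∧ s(u, v) = s(p.1, p.2) := ⟨(u, v), hu, hv, rfl⟩
    simp only [dif_pos hex]
    exact ⟨hex.choose_spec.1, hex.choose_spec.2.1⟩
  · rintro e ⟨he, u, hu, v, hv, rfl⟩ e' ⟨he', u', hu', v', hv', rfl⟩ heq
    have hex : ∃ p : V × V, p.1 ∈ S ∧ p.2 ∈ T ∧ s(u, v) = s(p.1, p.2) := ⟨(u, v), hu, hv, rfl⟩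
    have hex' : ∃ p : V × V, p.1 ∈ S ∧ p.2 ∈ T ∧ s(u', v') = s(p.1, p.2) :=
      ⟨(u', v'), hu', hv', rfl⟩
    simp only [dif_pos hex, dif_pos hex'] at heq
    rw [hex.choose_spec.2.2, hex'.choose_spec.2.2, heq]

private lemma cut_mono {G G' : SimpleGraph V} (h : G' ≤ G) (S T : Set V) :
    cutCount G' S T ≤ cutCount G S T := by
  apply Set.ncard_le_ncard _ (Set.toFinite _)
  rintro e ⟨he, hrest⟩
  exact ⟨SimpleGraph.edgeSet_mono h he, hrest⟩

private lemma edgesIn_indep {G : SimpleGraph V} {A : Set V}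
    (hA : ∀ u ∈ A, ∀ v ∈ A, ¬ G.Adj u v) : edgesIn G A = 0 := by
  have : {e ∈ G.edgeSet | ∀ v ∈ e, v ∈ A} = ∅ := by
    ext e
    induction e using Sym2.ind with
    | _ u v =>
      simp only [Set.mem_setOf_eq, Set.mem_empty_iff_false, iff_false, not_and]
      intro he hall
      exact hA u (hall u (Sym2.mem_mk_left u v)) v (hall v (Sym2.mem_mk_right u v))
        (by rwa [SimpleGraph.mem_edgeSet] at he)
  unfold edgesIn
  rw [this, Set.ncard_empty]

private lemma sym2_mk_out (e : Sym2 V) : s(e.out.1, e.out.2) = e := by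
  show Sym2.mk e.out.1 e.out.2 = e
  exact e.out_eq

private lemma key_count (G' : SimpleGraph V) [DecidableRel G'.Adj] (hG' : G'.CliqueFree 3) :
    ∃ S' T' : Set V, S' ∪ T' = Set.univ ∧ S' ∩ T' = ∅ ∧
      8 * G'.edgeSet.ncard ≤ 4 * cutCount G' S' T' + Fintype.card V * Fintype.card V := by
  classical
  -- max independent set
  set F : Finset (Finset V) :=
    Finset.univ.powerset.filter (fun A => ∀ u ∈ A, ∀ v ∈ A, ¬ G'.Adj u v) with hF
  have hFne : F.Nonempty := ⟨∅, by simp [hF]⟩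
  obtain ⟨A, hAF, hAmax⟩ := Finset.exists_max_image F Finset.card hFne
  have hAindep : ∀ u ∈ A, ∀ v ∈ A, ¬ G'.Adj u v := by
    rw [hF] at hAF; exact (Finset.mem_filter.1 hAF).2
  have hmax : ∀ B : Finset V, (∀ u ∈ B, ∀ v ∈ B, ¬ G'.Adj u v) → B.card ≤ A.card := by
    intro B hB
    exact hAmax B (by rw [hF]; exact Finset.mem_filter.2 ⟨Finset.mem_powerset.2 (Finset.subset_univ B), hB⟩)
  -- degree bound
  have hdeg : ∀ v : V, G'.degree v ≤ A.card := by
    intro v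
    rw [← SimpleGraph.card_neighborFinset_eq_degree]
    apply hmax
    intro u hu w hw hadj
    have h1 : G'.Adj v u := (SimpleGraph.mem_neighborFinset _ _ _).1 hu
    have h2 : G'.Adj v w := (SimpleGraph.mem_neighborFinset _ _ _).1 hw
    exact hG' {v, u, w} (SimpleGraph.is3Clique_triple_iff.2 ⟨h1, h2, hadj⟩)
  set B : Finset V := Finset.univ \ A with hB
  -- Q : ordered adjacent pairs with first coordinate in B
  set Q : Finset (V × V) := (B ×ˢ Finset.univ).filter (fun p => G'.Adj p.1 p.2) with hQ
  have hQcard : Q.card ≤ B.card * A.card := by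
    rw [Finset.card_eq_sum_card_fiberwise (f := Prod.fst) (t := B)
      (fun p hp => (Finset.mem_product.1 (Finset.mem_filter.1 hp).1).1)]
    calc ∑ v ∈ B, (Q.filter (fun p => p.1 = v)).card
        ≤ ∑ v ∈ B, A.card := by
          apply Finset.sum_le_sum
          intro v hv
          calc (Q.filter (fun p => p.1 = v)).card ≤ (G'.neighborFinset v).card := by
                apply Finset.card_le_card_of_injOn (fun p => p.2)
                · intro p hp
                  obtain ⟨hp1, hp2⟩ := Finset.mem_filter.1 hp
                  obtain ⟨hp3, hadj⟩ := Finset.mem_filter.1 hp1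
                  rw [Finset.mem_coe, SimpleGraph.mem_neighborFinset, ← hp2]
                  exact hadj
                · rintro ⟨a1, a2⟩ ha ⟨b1, b2⟩ hb hab
                  have ha' := (Finset.mem_filter.1 ha).2
                  have hb' := (Finset.mem_filter.1 hb).2
                  simp only at ha' hb' hab
                  rw [Prod.ext_iff]
                  exact ⟨ha'.trans hb'.symm, hab⟩
            _ ≤ A.card := by rw [SimpleGraph.card_neighborFinset_eq_degree]; exact hdeg v
      _ = B.card * A.card := by rw [Finset.sum_const, smul_eq_mul]
  -- the two injections
  set inBF : Finset (Sym2 V) := G'.edgeFinset.filter (fun e => ∀ v ∈ e, v ∈ B) with hinBF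
  have houtAdj : ∀ e ∈ G'.edgeFinset, G'.Adj e.out.1 e.out.2 := by
    intro e he
    rw [SimpleGraph.mem_edgeFinset] at he
    rw [← SimpleGraph.mem_edgeSet, sym2_mk_out]
    exact he
  set ψ : Sym2 V → V × V := fun e => if e.out.1 ∈ B then e.out else e.out.swap with hψ
  have hψB : ∀ e ∈ G'.edgeFinset, (ψ e).1 ∈ B ∧ G'.Adj (ψ e).1 (ψ e).2 := by
    intro e he
    have hadj := houtAdj e he
    by_cases h : e.out.1 ∈ B
    · simp only [hψ, if_pos h]; exact ⟨h, hadj⟩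
    · simp only [hψ, if_neg h, Prod.fst_swap, Prod.snd_swap]
      refine ⟨?_, hadj.symm⟩
      have h1 : e.out.1 ∈ A := by
        rw [hB] at h; simp at h; exact h
      by_contra h2
      have h2' : e.out.2 ∈ A := by
        rw [hB] at h2; simp at h2; exact h2
      exact hAindep _ h1 _ h2' hadj
  have hψmk : ∀ e : Sym2 V, s((ψ e).1, (ψ e).2) = e := by
    intro e
    by_cases h : e.out.1 ∈ B
    · simp only [hψ, if_pos h]; exact sym2_mk_out e
    · simp only [hψ, if_neg h, Prod.fst_swap, Prod.snd_swap]
      rw [Sym2.eq_swap]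
      exact sym2_mk_out e
  have hinj1 : Set.InjOn ψ G'.edgeFinset := by
    intro e he e' he' heq
    rw [← hψmk e, ← hψmk e', heq]
  have hinj2 : Set.InjOn (fun e => (ψ e).swap) inBF := by
    intro e he e' he' heq
    simp only [Prod.ext_iff, Prod.fst_swap, Prod.snd_swap] at heq
    apply hinj1 (by rw [hinBF] at he; exact (Finset.mem_filter.1 he).1)
      (by rw [hinBF] at he'; exact (Finset.mem_filter.1 he').1)
    rw [Prod.ext_iff]
    exact ⟨heq.2, heq.1⟩
  have him1 : G'.edgeFinset.image ψ ⊆ Q := by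
    intro p hp
    obtain ⟨e, he, rfl⟩ := Finset.mem_image.1 hp
    obtain ⟨h1, h2⟩ := hψB e he
    rw [hQ, Finset.mem_filter, Finset.mem_product]
    exact ⟨⟨h1, Finset.mem_univ _⟩, h2⟩
  have him2 : inBF.image (fun e => (ψ e).swap) ⊆ Q := by
    intro p hp
    obtain ⟨e, he, rfl⟩ := Finset.mem_image.1 hp
    rw [hinBF, Finset.mem_filter] at he
    obtain ⟨he1, he2⟩ := he
    obtain ⟨h1, h2⟩ := hψB e he1
    rw [hQ, Finset.mem_filter, Finset.mem_product]
    simp only [Prod.fst_swap, Prod.snd_swap]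
    refine ⟨⟨?_, Finset.mem_univ _⟩, h2.symm⟩
    apply he2
    have hmem : (ψ e).2 ∈ s((ψ e).1, (ψ e).2) := Sym2.mem_mk_right _ _
    rwa [hψmk e] at hmem
  have hdisj : Disjoint (G'.edgeFinset.image ψ) (inBF.image (fun e => (ψ e).swap)) := by
    rw [Finset.disjoint_left]
    rintro p hp1 hp2
    obtain ⟨e, he, rfl⟩ := Finset.mem_image.1 hp1
    obtain ⟨e', he', heq⟩ := Finset.mem_image.1 hp2
    have hee' : e' = e := by
      rw [← hψmk e, ← hψmk e']
      rw [← heq]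
      simp only [Prod.fst_swap, Prod.snd_swap]
      rw [Sym2.eq_swap]
    rw [hee'] at heq
    have h2 := (hψB e he).2
    have hfst : (ψ e).1 = (ψ e).2 := by
      have := congrArg Prod.fst heq
      simpa using this.symm
    rw [hfst] at h2
    exact G'.irrefl h2
  have hcards : G'.edgeFinset.card + inBF.card ≤ Q.card := by
    rw [← Finset.card_image_of_injOn hinj1, ← Finset.card_image_of_injOn hinj2,
      ← Finset.card_union_of_disjoint hdisj]
    exact Finset.card_le_card (Finset.union_subset him1 him2)
  -- totals
  have hBA : B.card + A.card = Fintype.card V := by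
    rw [hB, Finset.card_sdiff_of_subset (Finset.subset_univ A), Finset.card_univ]
    have := Finset.card_le_univ A
    omega
  have hABle : B.card * A.card * 4 ≤ Fintype.card V * Fintype.card V :=
    arith_nat A.card B.card _ hBA
  -- assemble
  refine ⟨(↑A : Set V), (↑B : Set V), ?_, ?_, ?_⟩
  · rw [hB]; simp
  · rw [hB]; ext x; simp
  · have hpart := edge_partition G' (↑A : Set V) (↑B : Set V) (by rw [hB]; simp)
      (by rw [hB]; ext x; simp)
    have hzero : edgesIn G' (↑A : Set V) = 0 := by
      apply edgesIn_indep
      intro u hu v hv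
      exact hAindep u hu v hv
    have hinBeq : edgesIn G' (↑B : Set V) = inBF.card := by
      unfold edgesIn
      rw [← Set.ncard_coe_finset inBF]
      congr 1
      ext e
      rw [hinBF]
      simp only [Set.mem_setOf_eq, Finset.coe_filter, SimpleGraph.mem_edgeFinset,
        Finset.mem_coe]
    have hecard : G'.edgeSet.ncard = G'.edgeFinset.card := by
      rw [← SimpleGraph.coe_edgeFinset, Set.ncard_coe_finset]
    rw [hzero, hinBeq] at hpart
    rw [hecard] at hpart ⊢
    omega

private lemma tri_bound {W : Type*} [Fintype W] [DecidableEq W] [LinearOrder W] (G : SimpleGraph W)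
    [DecidableRel G.Adj] (r : ℕ) (hBF : BookFree r G) :
    (G.cliqueFinset 3).card ≤ r * (Fintype.card W * Fintype.card W) := by
  classical
  rcases isEmpty_or_nonempty W with hW | hW
  · have : (G.cliqueFinset 3) = ∅ := by
      apply Finset.eq_empty_of_forall_notMem
      intro t ht
      have h3 := (SimpleGraph.mem_cliqueFinset_iff.1 ht).2
      obtain ⟨x, hx⟩ := Finset.card_pos.1 (by omega : 0 < t.card)
      exact (IsEmpty.false x)
    simp [this]
  · inhabit W
    set f : Finset W → W × W := fun t =>
      if h : t.Nonempty then
        (t.min' h, if h2 : (t.erase (t.min' h)).Nonempty then (t.erase (t.min' h)).min' h2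
          else t.min' h)
      else (default, default) with hf
    have hfiber : ∀ p ∈ (G.cliqueFinset 3).image f,
        ((G.cliqueFinset 3).filter (fun t => f t = p)).card ≤ r := by
      intro p hp
      set fib := (G.cliqueFinset 3).filter (fun t => f t = p) with hfib
      rcases Finset.eq_empty_or_nonempty fib with he | ⟨t₀, ht₀⟩
      · rw [he]; simp
      -- basic facts about members of the fiber
      have hfacts : ∀ t ∈ fib, t.card = 3 ∧ G.IsClique ↑t ∧ p.1 ∈ t ∧ p.2 ∈ t.erase p.1 := by
        intro t ht
        rw [hfib, Finset.mem_filter] at ht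
        obtain ⟨htc, htf⟩ := ht
        have hcl := SimpleGraph.mem_cliqueFinset_iff.1 htc
        have hc3 : t.card = 3 := hcl.2
        have hne : t.Nonempty := Finset.card_pos.1 (by omega)
        have hne2 : (t.erase (t.min' hne)).Nonempty := by
          rw [← Finset.card_pos, Finset.card_erase_of_mem (t.min'_mem hne)]
          omega
        rw [hf] at htf
        simp only [dif_pos hne, dif_pos hne2] at htf
        have h1 : p.1 = t.min' hne := by rw [← htf]
        have h2 : p.2 = (t.erase (t.min' hne)).min' hne2 := by rw [← htf]
        refine ⟨hc3, hcl.1, ?_, ?_⟩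
        · rw [h1]; exact t.min'_mem hne
        · rw [h1, h2]; exact Finset.min'_mem _ _
      -- p.1 adjacent to p.2
      obtain ⟨hc3, hcl, hp1, hp2⟩ := hfacts t₀ ht₀
      have hne : p.1 ≠ p.2 := fun h => (Finset.mem_erase.1 hp2).1 h.symm
      have hadj : G.Adj p.1 p.2 := hcl hp1 (Finset.mem_of_mem_erase hp2) hne
      -- map to the common neighbourhood
      set g : Finset W → W := fun t =>
        if h : ((t.erase p.1).erase p.2).Nonempty then ((t.erase p.1).erase p.2).min' h
        else default with hg
      have hgfacts : ∀ t ∈ fib, g t ∈ t ∧ g t ≠ p.1 ∧ g t ≠ p.2 ∧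
          t = insert p.1 (insert p.2 ({g t} : Finset W)) := by
        intro t ht
        obtain ⟨hc3, hcl', hp1', hp2'⟩ := hfacts t ht
        have hb : p.2 ∈ t := Finset.mem_of_mem_erase hp2'
        have hcard : ((t.erase p.1).erase p.2).card = 1 := by
          rw [Finset.card_erase_of_mem (Finset.mem_erase.2 ⟨fun h => hne h.symm, hb⟩),
            Finset.card_erase_of_mem hp1']
          omega
        have hne3 : ((t.erase p.1).erase p.2).Nonempty := Finset.card_pos.1 (by omega)
        have hgt : g t ∈ (t.erase p.1).erase p.2 := by
          rw [hg]; simp only [dif_pos hne3]; exact Finset.min'_mem _ _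
        have hgne2 := (Finset.mem_erase.1 hgt).1
        have hgt' := Finset.mem_of_mem_erase hgt
        have hgne1 := (Finset.mem_erase.1 hgt').1
        have hgtt := Finset.mem_of_mem_erase hgt'
        refine ⟨hgtt, hgne1, hgne2, ?_⟩
        have hsub : insert p.1 (insert p.2 ({g t} : Finset W)) ⊆ t := by
          intro x hx
          simp only [Finset.mem_insert, Finset.mem_singleton] at hx
          rcases hx with rfl | rfl | rfl
          · exact hp1'
          · exact hb
          · exact hgtt
        have hn1 : p.1 ∉ insert p.2 ({g t} : Finset W) := by
          simp only [Finset.mem_insert, Finset.mem_singleton]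
          push_neg
          exact ⟨hne, Ne.symm hgne1⟩
        have hn2 : p.2 ∉ ({g t} : Finset W) := by
          simp only [Finset.mem_singleton]
          exact Ne.symm hgne2
        have hcins : (insert p.1 (insert p.2 ({g t} : Finset W))).card = 3 := by
          rw [Finset.card_insert_of_notMem hn1, Finset.card_insert_of_notMem hn2,
            Finset.card_singleton]
        exact (Finset.eq_of_subset_of_card_le hsub (by omega)).symm
      have hginj : Set.InjOn g ↑fib := by
        intro t ht t' ht' hgg
        rw [(hgfacts t (by simpa using ht)).2.2.2, (hgfacts t' (by simpa using ht')).2.2.2, hgg]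
      calc fib.card = (↑fib : Set (Finset W)).ncard := (Set.ncard_coe_finset _).symm
        _ ≤ ({w : W | G.Adj p.1 w ∧ G.Adj p.2 w}).ncard := by
            apply Set.ncard_le_ncard_of_injOn g _ hginj (Set.toFinite _)
            intro t ht
            have ht' : t ∈ fib := by simpa using ht
            obtain ⟨hgtt, hgne1, hgne2, _⟩ := hgfacts t ht'
            obtain ⟨hc3, hcl', hp1', hp2'⟩ := hfacts t ht'
            exact ⟨hcl' hp1' hgtt (Ne.symm hgne1), hcl' (Finset.mem_of_mem_erase hp2') hgtt
              (Ne.symm hgne2)⟩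
        _ ≤ r := hBF p.1 p.2 hadj
    calc (G.cliqueFinset 3).card ≤ r * ((G.cliqueFinset 3).image f).card :=
          Finset.card_le_mul_card_image _ r hfiber
      _ ≤ r * (Fintype.card W * Fintype.card W) := by
          apply Nat.mul_le_mul_left
          calc ((G.cliqueFinset 3).image f).card ≤ (Finset.univ : Finset (W × W)).card :=
                Finset.card_le_card (Finset.subset_univ _)
            _ = Fintype.card W * Fintype.card W := by rw [Finset.card_univ, Fintype.card_prod]




set_option maxHeartbeats 2000000 in
theorem stmt_7 (r : ℕ) (hr : 1 ≤ r) (ε : ℝ) (hε : 0 < ε) :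
    ∃ n₀ : ℕ, ∀ n : ℕ, n₀ ≤ n →
      ∀ G : SimpleGraph (Fin n), ¬ G.Colorable 2 → BookFree r G →
        (∀ H : SimpleGraph (Fin n), ¬ H.Colorable 2 → BookFree r H →
          H.edgeSet.ncard ≤ G.edgeSet.ncard) →
        ((1 / 4 - ε) * (n : ℝ) ^ 2 ≤ (G.edgeSet.ncard : ℝ)) ∧
        ∀ S T : Set (Fin n), IsMaxCut G S T →
          ((edgesIn G S + edgesIn G T : ℝ) ≤ ε * (n : ℝ) ^ 2 ∧
           (1 / 2 - 3 / 2 * Real.sqrt ε) * (n : ℝ) ≤ (S.ncard : ℝ) ∧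
           (S.ncard : ℝ) ≤ (1 / 2 + 3 / 2 * Real.sqrt ε) * (n : ℝ) ∧
           (1 / 2 - 3 / 2 * Real.sqrt ε) * (n : ℝ) ≤ (T.ncard : ℝ) ∧
           (T.ncard : ℝ) ≤ (1 / 2 + 3 / 2 * Real.sqrt ε) * (n : ℝ)) := by
  classical
  have hε4 : 0 < min (ε/4) (1/2 : ℝ) := by positivity
  set δ : ℝ := min (ε/4) (1/2) with hδdef
  have hδ1 : δ ≤ 1 := le_trans (min_le_right _ _) (by norm_num)
  have hδε : δ ≤ ε/4 := min_le_left _ _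
  set c : ℝ := SimpleGraph.triangleRemovalBound δ with hcdef
  have hc : 0 < c := SimpleGraph.triangleRemovalBound_pos hε4
  refine ⟨max (max 20 (⌈(r:ℝ)/c⌉₊ + 1)) (⌈(64:ℝ)/ε⌉₊ + 1), ?_⟩
  intro n hn G hGnb hGbf hGext
  have hn20 : 20 ≤ n := le_trans (le_trans (le_max_left _ _) (le_max_left _ _)) hn
  have hnrc : (r : ℝ) < c * n := by
    have h1 : (⌈(r:ℝ)/c⌉₊ + 1 : ℕ) ≤ n := le_trans (le_trans (le_max_right _ _) (le_max_left _ _)) hn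
    have h2 : (r:ℝ)/c ≤ (⌈(r:ℝ)/c⌉₊ : ℝ) := Nat.le_ceil _
    have h3 : ((⌈(r:ℝ)/c⌉₊ : ℝ) + 1) ≤ (n:ℝ) := by exact_mod_cast h1
    have h4 : (r:ℝ)/c < (n:ℝ) := by linarith
    calc (r:ℝ) = ((r:ℝ)/c) * c := by field_simp
    _ < (n:ℝ) * c := by
        apply mul_lt_mul_of_pos_right h4 hc
    _ = c * n := mul_comm _ _
  have hnε : (64:ℝ) < ε * n := by
    have h1 : (⌈(64:ℝ)/ε⌉₊ + 1 : ℕ) ≤ n := le_trans (le_max_right _ _) hn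
    have h2 : (64:ℝ)/ε ≤ (⌈(64:ℝ)/ε⌉₊ : ℝ) := Nat.le_ceil _
    have h3 : ((⌈(64:ℝ)/ε⌉₊ : ℝ) + 1) ≤ (n:ℝ) := by exact_mod_cast h1
    have h4 : (64:ℝ)/ε < (n:ℝ) := by linarith
    calc (64:ℝ) = ((64:ℝ)/ε) * ε := by field_simp
    _ < (n:ℝ) * ε := mul_lt_mul_of_pos_right h4 hε
    _ = ε * n := mul_comm _ _
  have hnR : (20:ℝ) ≤ (n:ℝ) := by exact_mod_cast hn20
  -- lower bound on e(G) via the pentagon-type construction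
  set k : ℕ := (n+3)/2 with hkdef
  have h3k : 3 < k := by omega
  have hkn : k < n := by omega
  have hHle : (Hgraph n k).edgeSet.ncard ≤ G.edgeSet.ncard :=
    hGext _ (Hgraph_not_col n k h3k hkn) (Hgraph_bookFree n k r)
  have hHcount := Hgraph_edges n k h3k hkn
  set eG : ℝ := (G.edgeSet.ncard : ℝ) with heGdef
  have heG : (n:ℝ)^2/4 - 2*n ≤ eG := by
    have h1 : ((k - 3) * (n - k) : ℕ) ≤ G.edgeSet.ncard := le_trans hHcount hHle
    have h2 : (((k - 3) * (n - k) : ℕ) : ℝ) ≤ (G.edgeSet.ncard : ℝ) := by exact_mod_cast h1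
    rw [← heGdef] at h2
    have hk3 : ((k - 3 : ℕ) : ℝ) = (k:ℝ) - 3 := by
      have : (3:ℕ) ≤ k := by omega
      push_cast [Nat.cast_sub this]
      ring
    have hnk : ((n - k : ℕ) : ℝ) = (n:ℝ) - k := by
      have : k ≤ n := by omega
      push_cast [Nat.cast_sub this]
      ring
    rw [Nat.cast_mul, hk3, hnk] at h2
    have hb1 : (n:ℝ) + 2 ≤ 2 * k := by
      have : n + 2 ≤ 2 * k := by omega
      exact_mod_cast this
    have hb2 : 2 * (k:ℝ) ≤ (n:ℝ) + 3 := by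
      have : 2 * k ≤ n + 3 := by omega
      exact_mod_cast this
    exact arith1 _ _ _ h2 hb1 hb2 hnR
  have hεn2 : (64:ℝ) * n ≤ ε * n^2 := arith2 ε n hnε (by positivity)
  constructor
  · -- e(G) ≥ (1/4 - ε) n²
    exact arith3 eG ε n heG hεn2 (by positivity)
  · intro S T hMC
    obtain ⟨hSTu, hSTi, hSTmax⟩ := hMC
    letI : DecidableRel G.Adj := Classical.decRel _
    -- few triangles
    have htri : ((G.cliqueFinset 3).card : ℝ) < c * (n:ℝ)^3 := by
      have h1 := tri_bound G r hGbf
      rw [Fintype.card_fin] at h1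
      have h2 := (Nat.cast_le (α := ℝ)).2 h1
      rw [Nat.cast_mul, Nat.cast_mul] at h2
      have h3 : (0:ℝ) < (n:ℝ) * n := by positivity
      calc ((G.cliqueFinset 3).card : ℝ) ≤ (r:ℝ) * ((n:ℝ) * (n:ℝ)) := h2
      _ < (c * n) * (n * n) := by apply mul_lt_mul_of_pos_right hnrc h3
      _ = c * (n:ℝ)^3 := by ring
    -- triangle removal
    obtain ⟨G', hle, hdec, hdiff, hfree⟩ := SimpleGraph.triangle_removal (G := G) (ε := δ) (by
      rw [Fintype.card_fin]
      exact_mod_cast htri)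
    have heGF : G.edgeSet.ncard = G.edgeFinset.card := by
      rw [← SimpleGraph.coe_edgeFinset, Set.ncard_coe_finset]
    have heGF' : G'.edgeSet.ncard = G'.edgeFinset.card := by
      rw [← SimpleGraph.coe_edgeFinset, Set.ncard_coe_finset]
    rw [Fintype.card_fin] at hdiff
    set eG' : ℝ := (G'.edgeSet.ncard : ℝ) with heG'def
    have heG'ge : eG - δ * n^2 ≤ eG' := by
      have h1 : ((G.edgeFinset.card : ℝ) - (G'.edgeFinset.card : ℝ)) < δ * ((n^2 : ℕ) : ℝ) := hdiff
      rw [heGdef, heG'def, heGF, heGF']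
      push_cast at h1 ⊢
      linarith
    -- key counting on G'
    obtain ⟨S', T', hu', hi', hkey⟩ := key_count G' hfree
    rw [Fintype.card_fin] at hkey
    have hkeyR : 8 * eG' ≤ 4 * (cutCount G' S' T' : ℝ) + (n:ℝ) * n := by
      rw [heG'def]
      exact_mod_cast hkey
    -- max cut comparison
    have hcut1 : cutCount G' S' T' ≤ cutCount G S' T' := cut_mono hle S' T'
    have hcut2 : cutCount G S' T' ≤ cutCount G S T := hSTmax S' T' hu' hi'
    have hcutR : (cutCount G' S' T' : ℝ) ≤ (cutCount G S T : ℝ) := by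
      exact_mod_cast le_trans hcut1 hcut2
    -- edge partition for G
    have hpart := edge_partition G S T hSTu hSTi
    have hpartR : eG = (cutCount G S T : ℝ) + (edgesIn G S : ℝ) + (edgesIn G T : ℝ) := by
      rw [heGdef]
      exact_mod_cast hpart
    set cutR : ℝ := (cutCount G S T : ℝ) with hcutdef
    set inR : ℝ := (edgesIn G S : ℝ) + (edgesIn G T : ℝ) with hindef
    -- in-edge bound
    have hinbound : inR ≤ 2*n + 2*δ*n^2 := by
      have h1 : 8 * (eG - δ*n^2) ≤ 4 * cutR + n*n := by
        calc 8 * (eG - δ*n^2) ≤ 8 * eG' := by linarith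
        _ ≤ 4 * (cutCount G' S' T' : ℝ) + (n:ℝ)*n := hkeyR
        _ ≤ 4 * cutR + (n:ℝ)*n := by rw [hcutdef]; linarith
      have h2 : inR = eG - cutR := by rw [hindef, hcutdef]; linarith [hpartR]
      linarith only [h1, h2, heG, sq_abs (n:ℝ), sq_nonneg (n:ℝ)]
    have hδbound : 2*δ*n^2 ≤ ε*n^2/2 := arith5 δ ε n hδε (sq_nonneg _)
    have hinfinal : inR ≤ ε * n^2 := by
      have h2n : (2:ℝ)*n ≤ ε*n^2/2 := by
        have h0 : (0:ℝ) ≤ n := by positivity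
        linarith only [hεn2, h0]
      linarith
    refine ⟨by exact_mod_cast hinfinal, ?_⟩
    -- sizes
    have hst : S.ncard + T.ncard = n := by
      have hdisj : Disjoint S T := Set.disjoint_iff_inter_eq_empty.2 hSTi
      have h1 : (S ∪ T).ncard = S.ncard + T.ncard :=
        Set.ncard_union_eq hdisj (Set.toFinite _) (Set.toFinite _)
      rw [hSTu] at h1
      rw [← h1, Set.ncard_univ, Nat.card_eq_fintype_card, Fintype.card_fin]
    have hcutst : cutCount G S T ≤ S.ncard * T.ncard := cut_le_mul G S T hSTi
    set s : ℝ := (S.ncard : ℝ) with hsdef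
    set t : ℝ := (T.ncard : ℝ) with htdef
    have hstR : s + t = n := by rw [hsdef, htdef]; exact_mod_cast hst
    have hcutstR : cutR ≤ s * t := by
      rw [hcutdef, hsdef, htdef]; exact_mod_cast hcutst
    have hstlow : (n:ℝ)^2/4 - 4*n - ε*n^2/2 ≤ s * t := by
      have h2 : cutR = eG - inR := by rw [hindef, hcutdef]; linarith [hpartR]
      have : eG - inR ≤ s * t := by rw [← h2]; exact hcutstR
      linarith only [this, heG, hinbound, hδbound]
    have hsq : (s - t)^2 ≤ 9 * ε * n^2 := by
      have h16 : (16:ℝ)*n ≤ ε*n^2/4 := by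
        have h0 : (0:ℝ) ≤ n := by positivity
        linarith only [hεn2, h0]
      exact arith9 s t n ε hstR hstlow h16
    have hsqrt : |s - t| ≤ 3 * Real.sqrt ε * n := by
      have h0 : (0:ℝ) ≤ 3 * Real.sqrt ε * n := by positivity
      have h1 : (s-t)^2 ≤ (3 * Real.sqrt ε * n)^2 := by
        have : (3 * Real.sqrt ε * n)^2 = 9 * (Real.sqrt ε)^2 * n^2 := by ring
        rw [this, Real.sq_sqrt hε.le]
        linarith only [hsq]
      have h2 := Real.sqrt_le_sqrt h1
      rwa [Real.sqrt_sq_eq_abs, Real.sqrt_sq_eq_abs, abs_of_nonneg h0] at h2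
    obtain ⟨hab1, hab2⟩ := abs_le.1 hsqrt
    refine ⟨by linarith, by linarith, by linarith, by linarith⟩
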